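/- Let X be an ergodic Markov chain on a finite state space with stationary distribution π(y) ≥ ρ/M for all y and mixing time bound t_mix(ρ/(2M)) ≤ t. Then for any states x, y, the expected hitting time satisfies E_x[τ̄_y] ≤ (1 − exp(−ρ/(2Mt)))^{−1}, which is O(Mt/ρ). -/

import Mathlib

open MeasureTheory
open scoped ENNReal

noncomputable section

set_option linter.unusedSectionVars false
namespace HitAux

variable {S : Type*} [Fintype S] [DecidableEq S]

/-- weight of a path of length `n` started at `x`. -/
def wgt (p : S → S → ℝ) (x : S) (n : ℕ) (v : Fin (n+1) → S) : ℝ :=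
  if v 0 = x then ∏ i : Fin n, p (v i.castSucc) (v i.succ) else 0

lemma wgt_nonneg {p : S → S → ℝ} (hp0 : ∀ a b, 0 ≤ p a b) (x : S) (n : ℕ)
    (v : Fin (n+1) → S) : 0 ≤ wgt p x n v := by
  unfold wgt
  split
  · exact Finset.prod_nonneg fun i _ => hp0 _ _
  · exact le_refl 0

lemma wgt_snoc (p : S → S → ℝ) (x : S) (n : ℕ) (u : Fin (n+1) → S) (z : S) :
    wgt p x (n+1) (Fin.snoc u z) = wgt p x n u * p (u (Fin.last n)) z := by
  unfold wgt
  have h0 : (Fin.snoc u z : Fin (n+2) → S) 0 = u 0 := by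
    have : (0 : Fin (n+2)) = Fin.castSucc 0 := rfl
    rw [this, Fin.snoc_castSucc]
  rw [h0]
  split
  · rw [Fin.prod_univ_castSucc]
    congr 1
    · apply Finset.prod_congr rfl
      intro i _
      have h1 : (i.castSucc.castSucc : Fin (n+2)) = Fin.castSucc i.castSucc := rfl
      have h2 : (i.castSucc.succ : Fin (n+2)) = Fin.castSucc i.succ := by
        ext; simp
      rw [h1, Fin.snoc_castSucc, h2, Fin.snoc_castSucc]
    · have h3 : ((Fin.last n).succ : Fin (n+2)) = Fin.last (n+1) := by
        ext; simp
      rw [Fin.snoc_castSucc, h3, Fin.snoc_last]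
  · ring

/-- summing over paths of length n+1 by splitting off the last coordinate -/
lemma sum_snoc (n : ℕ) (f : (Fin (n+2) → S) → ℝ) :
    ∑ v : Fin (n+2) → S, f v = ∑ u : Fin (n+1) → S, ∑ z : S, f (Fin.snoc u z) := by
  rw [← (Fin.snocEquiv (fun _ => S)).sum_comp f, Fintype.sum_prod_type, Finset.sum_comm]
  rfl


/-- paths avoiding `B` at all positive times -/
def Avoid (B : Finset S) (n : ℕ) (v : Fin (n+1) → S) : Prop :=
  ∀ i : Fin (n+1), 0 < i.val → v i ∉ B

instance (B : Finset S) (n : ℕ) : DecidablePred (Avoid B n) := by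
  unfold Avoid; infer_instance

/-- sub-probability vector after `n` steps avoiding `B`. -/
def U (p : S → S → ℝ) (B : Finset S) (x : S) (n : ℕ) (z : S) : ℝ :=
  ∑ v ∈ Finset.univ.filter (fun v : Fin (n+1) → S => Avoid B n v ∧ v (Fin.last n) = z),
    wgt p x n v

lemma U_nonneg {p : S → S → ℝ} (hp0 : ∀ a b, 0 ≤ p a b) (B : Finset S) (x : S) (n : ℕ)
    (z : S) : 0 ≤ U p B x n z :=
  Finset.sum_nonneg fun v _ => wgt_nonneg hp0 x n v

lemma U_zero (p : S → S → ℝ) (B : Finset S) (x z : S) :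
    U p B x 0 z = if z = x then 1 else 0 := by
  unfold U
  rw [Finset.sum_filter, ← (Equiv.funUnique (Fin 1) S).symm.sum_comp]
  have hA : ∀ w : S, Avoid B 0 (fun _ : Fin 1 => w) := by
    intro w i hi
    rw [Fin.eq_zero i] at hi
    exact absurd hi (by simp)
  have he : ∀ w : S, ((Equiv.funUnique (Fin 1) S).symm w : Fin 1 → S) = fun _ => w :=
    fun _ => rfl
  simp only [he]
  have hsum : ∀ w : S,
      (if Avoid B 0 (fun _ : Fin 1 => w) ∧ (fun _ : Fin 1 => w) (Fin.last 0) = z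
        then wgt p x 0 (fun _ : Fin 1 => w) else 0)
      = if w = z then (if w = x then 1 else 0) else 0 := by
    intro w
    simp [hA w, wgt]
  simp only [hsum]
  rw [Finset.sum_ite_eq' Finset.univ z (fun w => if w = x then 1 else 0)]
  simp

lemma avoid_snoc_iff (B : Finset S) (n : ℕ) (u : Fin (n+1) → S) (z : S) :
    Avoid B (n+1) (Fin.snoc u z) ↔ Avoid B n u ∧ z ∉ B := by
  constructor
  · intro h
    refine ⟨fun i hi => ?_, ?_⟩
    · have := h i.castSucc (by simpa using hi)
      rwa [Fin.snoc_castSucc] at this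
    · have := h (Fin.last (n+1)) (by simp)
      rwa [Fin.snoc_last] at this
  · rintro ⟨h1, h2⟩ i hi
    rcases Fin.eq_castSucc_or_eq_last i with ⟨j, rfl⟩ | rfl
    · rw [Fin.snoc_castSucc]
      exact h1 j (by simpa using hi)
    · rw [Fin.snoc_last]
      exact h2

lemma U_succ (p : S → S → ℝ) (B : Finset S) (x : S) (n : ℕ) (z : S) :
    U p B x (n+1) z = if z ∈ B then 0 else ∑ w, U p B x n w * p w z := by
  unfold U
  rw [Finset.sum_filter, sum_snoc]
  have key : ∀ (u : Fin (n+1) → S) (w : S),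
      (if Avoid B (n+1) (Fin.snoc u w) ∧ (Fin.snoc u w : Fin (n+2) → S) (Fin.last (n+1)) = z
        then wgt p x (n+1) (Fin.snoc u w) else 0)
      = if w = z then (if z ∈ B then 0 else
          (if Avoid B n u then wgt p x n u else 0) * p (u (Fin.last n)) z) else 0 := by
    intro u w
    simp only [Fin.snoc_last, avoid_snoc_iff, wgt_snoc]
    by_cases hw : w = z
    · subst hw
      by_cases hB : w ∈ B <;> by_cases hA : Avoid B n u <;> simp [hB, hA]
    · simp [hw]
  simp only [key]
  simp only [Finset.sum_ite_eq' Finset.univ z]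
  simp only [Finset.mem_univ, if_true]
  by_cases hB : z ∈ B
  · simp [hB]
  · simp only [hB, if_false]
    have hw : ∀ w : S,
        (∑ v ∈ Finset.filter (fun v : Fin (n+1) → S => Avoid B n v ∧ v (Fin.last n) = w)
          Finset.univ, wgt p x n v) * p w z
        = ∑ v : Fin (n+1) → S,
            (if Avoid B n v ∧ v (Fin.last n) = w then wgt p x n v * p w z else 0) := by
      intro w
      rw [Finset.sum_filter, Finset.sum_mul]
      apply Finset.sum_congr rfl
      intro v _
      split <;> simp
    simp only [hw]
    rw [Finset.sum_comm]
    apply Finset.sum_congr rfl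
    intro v _
    by_cases hA : Avoid B n v
    · simp only [hA, true_and]
      rw [Finset.sum_ite_eq Finset.univ (v (Fin.last n)) (fun w => wgt p x n v * p w z)]
      simp
    · simp [hA]


lemma sum_U_empty {p : S → S → ℝ} (hp1 : ∀ a, ∑ b, p a b = 1) (x : S) (n : ℕ) :
    ∑ z, U p ∅ x n z = 1 := by
  induction n with
  | zero => simp [U_zero]
  | succ n ih =>
    simp only [U_succ, Finset.notMem_empty, if_false]
    rw [Finset.sum_comm]
    have : ∀ w : S, ∑ z, U p ∅ x n w * p w z = U p ∅ x n w := by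
      intro w
      rw [← Finset.mul_sum, hp1 w, mul_one]
    rw [Finset.sum_congr rfl fun w _ => this w, ih]

lemma U_add {p : S → S → ℝ} (hp0 : ∀ a b, 0 ≤ p a b) (B : Finset S) (x : S) (n m : ℕ)
    (z : S) : U p B x (n+m) z ≤ ∑ w, U p B x n w * U p ∅ w m z := by
  induction m generalizing z with
  | zero =>
    have : ∀ w : S, U p B x n w * U p ∅ w 0 z = if w = z then U p B x n w else 0 := by
      intro w
      rw [U_zero]
      by_cases h : w = z
      · simp [h]
      · simp [h, Ne.symm h]
    rw [Finset.sum_congr rfl fun w _ => this w, Finset.sum_ite_eq' Finset.univ z]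
    simp
  | succ m ih =>
    have h1 : U p B x (n + (m+1)) z ≤ ∑ w', U p B x (n+m) w' * p w' z := by
      rw [show n + (m+1) = (n+m)+1 from rfl, U_succ]
      split
      · exact Finset.sum_nonneg fun w _ =>
          mul_nonneg (U_nonneg hp0 _ _ _ _) (hp0 _ _)
      · exact le_refl _
    refine h1.trans ?_
    have h2 : ∑ w', U p B x (n+m) w' * p w' z
        ≤ ∑ w', (∑ w, U p B x n w * U p ∅ w m w') * p w' z := by
      apply Finset.sum_le_sum
      intro w' _
      exact mul_le_mul_of_nonneg_right (ih w') (hp0 _ _)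
    refine h2.trans ?_
    apply le_of_eq
    calc ∑ w', (∑ w, U p B x n w * U p ∅ w m w') * p w' z
        = ∑ w', ∑ w, U p B x n w * U p ∅ w m w' * p w' z := by
          apply Finset.sum_congr rfl; intro w' _; rw [Finset.sum_mul]
      _ = ∑ w, ∑ w', U p B x n w * U p ∅ w m w' * p w' z := Finset.sum_comm
      _ = ∑ w, U p B x n w * U p ∅ w (m+1) z := by
          apply Finset.sum_congr rfl
          intro w _
          rw [U_succ]
          simp only [Finset.notMem_empty, if_false]
          rw [Finset.mul_sum]
          apply Finset.sum_congr rfl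
          intro w' _
          ring


lemma decay {p : S → S → ℝ} (hp0 : ∀ a b, 0 ≤ p a b) (hp1 : ∀ a, ∑ b, p a b = 1)
    (y : S) {c : ℝ} {m : ℕ} (hm : 1 ≤ m) (hc : ∀ w, c ≤ U p ∅ w m y) (x : S) (n : ℕ) :
    ∑ z, U p {y} x (n+m) z ≤ (1-c) * ∑ z, U p {y} x n z := by
  have h0 : U p {y} x (n+m) y = 0 := by
    obtain ⟨k, hk⟩ : ∃ k, n + m = k + 1 := ⟨n + m - 1, by omega⟩
    rw [hk, U_succ]
    simp
  calc ∑ z, U p {y} x (n+m) z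
      = ∑ z ∈ Finset.univ.erase y, U p {y} x (n+m) z := by
        rw [← Finset.add_sum_erase Finset.univ _ (Finset.mem_univ y), h0, zero_add]
    _ ≤ ∑ z ∈ Finset.univ.erase y, ∑ w, U p {y} x n w * U p ∅ w m z :=
        Finset.sum_le_sum fun z _ => U_add hp0 {y} x n m z
    _ = ∑ w, U p {y} x n w * ∑ z ∈ Finset.univ.erase y, U p ∅ w m z := by
        rw [Finset.sum_comm]
        apply Finset.sum_congr rfl
        intro w _
        rw [Finset.mul_sum]
    _ ≤ ∑ w, U p {y} x n w * (1 - c) := by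
        apply Finset.sum_le_sum
        intro w _
        apply mul_le_mul_of_nonneg_left _ (U_nonneg hp0 _ _ _ _)
        have hsum : ∑ z ∈ Finset.univ.erase y, U p ∅ w m z = 1 - U p ∅ w m y := by
          have := sum_U_empty hp1 w m
          rw [← Finset.add_sum_erase Finset.univ _ (Finset.mem_univ y)] at this
          linarith
        rw [hsum]
        linarith [hc w]
    _ = (1-c) * ∑ z, U p {y} x n z := by
        rw [← Finset.sum_mul, mul_comm]

lemma geom_decay {p : S → S → ℝ} (hp0 : ∀ a b, 0 ≤ p a b) (hp1 : ∀ a, ∑ b, p a b = 1)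
    (y : S) {c : ℝ} {m : ℕ} (hm : 1 ≤ m) (hc0 : 0 ≤ c) (hc1 : c ≤ 1)
    (hc : ∀ w, c ≤ U p ∅ w m y) (x : S) (k : ℕ) :
    ∑ z, U p {y} x (m * k) z ≤ (1-c)^k := by
  induction k with
  | zero =>
    simp only [Nat.mul_zero, pow_zero]
    have h := sum_U_empty hp1 x 0
    have hle : ∑ z, U p {y} x 0 z ≤ ∑ z, U p ∅ x 0 z := by
      apply Finset.sum_le_sum
      intro z _
      simp [U_zero]
    linarith
  | succ k ih =>
    have : m * (k+1) = m * k + m := by ring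
    rw [this]
    calc ∑ z, U p {y} x (m * k + m) z
        ≤ (1-c) * ∑ z, U p {y} x (m * k) z := decay hp0 hp1 y hm hc x (m * k)
      _ ≤ (1-c) * (1-c)^k := by
          apply mul_le_mul_of_nonneg_left ih
          linarith
      _ = (1-c)^(k+1) := by ring


def extFn (n : ℕ) (v : Fin (n+1) → S) : ℕ → S := fun i => v ⟨min i n, by omega⟩

lemma extFn_eq (n : ℕ) (v : Fin (n+1) → S) (i : Fin (n+1)) : extFn n v i.val = v i := by
  unfold extFn
  congr 1
  have h := i.isLt
  ext
  simp [Nat.min_eq_left (by omega : i.val ≤ n)]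

def Cyl (n : ℕ) (v : Fin (n+1) → S) : Set (ℕ → S) := {ω | ∀ i ≤ n, ω i = extFn n v i}

lemma mem_Cyl_iff (n : ℕ) (v : Fin (n+1) → S) (ω : ℕ → S) :
    ω ∈ Cyl n v ↔ (fun i : Fin (n+1) => ω i.val) = v := by
  constructor
  · intro h
    funext i
    have := h i.val (by have := i.isLt; omega)
    rw [this, extFn_eq]
  · intro h i hi
    have : extFn n v i = v ⟨i, by omega⟩ := extFn_eq n v ⟨i, by omega⟩
    rw [this, ← h]

lemma sum_wgt_total {p : S → S → ℝ} (hp1 : ∀ a, ∑ b, p a b = 1) (x : S) (n : ℕ) :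
    ∑ v : Fin (n+1) → S, wgt p x n v = 1 := by
  have h := sum_U_empty hp1 x n
  unfold U at h
  rw [← h]
  have hfc : ∀ z : S, (Finset.univ.filter
      (fun v : Fin (n+1) → S => Avoid ∅ n v ∧ v (Fin.last n) = z))
      = Finset.univ.filter (fun v : Fin (n+1) → S => v (Fin.last n) = z) := by
    intro z
    apply Finset.filter_congr
    intro v _
    have : Avoid ∅ n v := fun i _ => Finset.notMem_empty _
    simp [this]
  simp only [hfc]
  rw [Finset.sum_fiberwise Finset.univ (fun v : Fin (n+1) → S => v (Fin.last n))
    (wgt p x n)]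

section Meas

variable [MeasurableSpace S] {p : S → S → ℝ} (P : S → Measure (ℕ → S))

lemma meas_Cyl
    (hcyl : ∀ (x : S) (γ : ℕ → S) (n : ℕ), P x {ω | ∀ i ≤ n, ω i = γ i} =
        if γ 0 = x then ENNReal.ofReal (∏ i ∈ Finset.range n, p (γ i) (γ (i+1))) else 0)
    (x : S) (n : ℕ) (v : Fin (n+1) → S) :
    P x (Cyl n v) = ENNReal.ofReal (wgt p x n v) := by
  have h := hcyl x (extFn n v) n
  rw [show Cyl n v = {ω | ∀ i ≤ n, ω i = extFn n v i} from rfl, h]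
  have h0 : extFn n v 0 = v 0 := extFn_eq n v 0
  rw [h0]
  unfold wgt
  split
  · congr 1
    rw [← Fin.prod_univ_eq_prod_range (fun i => p (extFn n v i) (extFn n v (i+1))) n]
    apply Finset.prod_congr rfl
    intro i _
    rw [show extFn n v i.val = v i.castSucc from extFn_eq n v i.castSucc,
        show extFn n v (i.val+1) = v i.succ from extFn_eq n v i.succ]
  · simp

lemma meas_event
    (hp0 : ∀ a b, 0 ≤ p a b) (hp1 : ∀ a, ∑ b, p a b = 1)
    (hP : ∀ x, IsProbabilityMeasure (P x))
    (hcyl : ∀ (x : S) (γ : ℕ → S) (n : ℕ), P x {ω | ∀ i ≤ n, ω i = γ i} =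
        if γ 0 = x then ENNReal.ofReal (∏ i ∈ Finset.range n, p (γ i) (γ (i+1))) else 0)
    (x : S) (n : ℕ) (Q : (Fin (n+1) → S) → Prop) [DecidablePred Q] :
    P x {ω : ℕ → S | Q (fun i => ω i.val)} =
      ENNReal.ofReal (∑ v ∈ Finset.univ.filter Q, wgt p x n v) := by
  have hprob := hP x
  have hub : ∀ (R : (Fin (n+1) → S) → Prop) (instR : DecidablePred R),
      P x {ω : ℕ → S | R (fun i => ω i.val)}
        ≤ ENNReal.ofReal (∑ v ∈ Finset.univ.filter R, wgt p x n v) := by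
    intro R instR
    have cover : {ω : ℕ → S | R (fun i => ω i.val)}
        ⊆ ⋃ v ∈ Finset.univ.filter R, Cyl n v := by
      intro ω hω
      simp only [Set.mem_iUnion]
      refine ⟨fun i => ω i.val, ?_, (mem_Cyl_iff n _ ω).mpr rfl⟩
      simp only [Finset.mem_filter, Finset.mem_univ, true_and]
      exact hω
    refine (measure_mono cover).trans ?_
    refine (measure_biUnion_finset_le _ _).trans ?_
    rw [ENNReal.ofReal_sum_of_nonneg fun v _ => wgt_nonneg hp0 x n v]
    apply le_of_eq
    exact Finset.sum_congr rfl fun v _ => meas_Cyl P hcyl x n v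
  refine le_antisymm (hub Q inferInstance) ?_
  have hcompl : {ω : ℕ → S | Q (fun i => ω i.val)}ᶜ
      = {ω : ℕ → S | ¬ Q (fun i => ω i.val)} := rfl
  have hQc := hub (fun v => ¬ Q v) inferInstance
  have hsplit : (∑ v ∈ Finset.univ.filter Q, wgt p x n v)
      + ∑ v ∈ Finset.univ.filter (fun v => ¬ Q v), wgt p x n v = 1 := by
    rw [Finset.sum_filter_add_sum_filter_not]
    exact sum_wgt_total hp1 x n
  set A := {ω : ℕ → S | Q (fun i => ω i.val)}
  set s1 := ∑ v ∈ Finset.univ.filter Q, wgt p x n v with hs1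
  set s2 := ∑ v ∈ Finset.univ.filter (fun v => ¬ Q v), wgt p x n v with hs2
  have hs1n : 0 ≤ s1 := Finset.sum_nonneg fun v _ => wgt_nonneg hp0 x n v
  have hs2n : 0 ≤ s2 := Finset.sum_nonneg fun v _ => wgt_nonneg hp0 x n v
  have h1 : (1:ℝ≥0∞) ≤ P x A + P x Aᶜ := by
    calc (1:ℝ≥0∞) = P x Set.univ := (measure_univ).symm
      _ = P x (A ∪ Aᶜ) := by rw [Set.union_compl_self]
      _ ≤ P x A + P x Aᶜ := measure_union_le A Aᶜ
  have h2 : P x Aᶜ ≤ ENNReal.ofReal s2 := by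
    rw [hcompl]
    exact hQc
  have h3 : ENNReal.ofReal s1 + ENNReal.ofReal s2 = 1 := by
    rw [← ENNReal.ofReal_add hs1n hs2n, hsplit, ENNReal.ofReal_one]
  have h4 : ENNReal.ofReal s1 + ENNReal.ofReal s2 ≤ P x A + ENNReal.ofReal s2 := by
    rw [h3]
    exact h1.trans (add_le_add le_rfl h2)
  exact ENNReal.add_le_add_iff_right ENNReal.ofReal_ne_top |>.mp h4

end Meas


lemma ennreal_le_tsum_lt (a : ℝ≥0∞) :
    a ≤ ∑' m : ℕ, (if (m : ℝ≥0∞) < a then (1:ℝ≥0∞) else 0) := by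
  by_cases htop : a = ⊤
  · subst htop
    have hone : ∀ m : ℕ, (if (m : ℝ≥0∞) < ⊤ then (1:ℝ≥0∞) else 0) = 1 := fun m => by
      simp [ENNReal.natCast_lt_top]
    rw [tsum_congr hone, ENNReal.tsum_const_eq_top_of_ne_zero one_ne_zero]
  · by_cases h0 : a = 0
    · simp [h0]
    set k := ⌈a.toReal⌉₊ with hk
    have hak : a ≤ (k : ℝ≥0∞) := by
      rw [← ENNReal.ofReal_toReal htop, ← ENNReal.ofReal_natCast]
      exact ENNReal.ofReal_le_ofReal (Nat.le_ceil _)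
    refine hak.trans ?_
    have hterm : ∀ m ∈ Finset.range k, (if (m : ℝ≥0∞) < a then (1:ℝ≥0∞) else 0) = 1 := by
      intro m hm
      rw [Finset.mem_range] at hm
      have hlt : (m : ℝ) < a.toReal := Nat.lt_ceil.mp hm
      have : (m : ℝ≥0∞) < a := by
        rw [← ENNReal.ofReal_toReal htop, ← ENNReal.ofReal_natCast]
        exact (ENNReal.ofReal_lt_ofReal_iff (lt_of_le_of_lt (Nat.cast_nonneg m) hlt)).mpr hlt
      simp [this]
    calc (k : ℝ≥0∞) = ∑ m ∈ Finset.range k, (if (m : ℝ≥0∞) < a then (1:ℝ≥0∞) else 0) := by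
          rw [Finset.sum_congr rfl hterm]
          simp
      _ ≤ _ := ENNReal.sum_le_tsum _

lemma lintegral_le_tsum_tail {α : Type*} [MeasurableSpace α] (μ : Measure α) (f : α → ℕ∞) :
    ∫⁻ a, (f a : ℝ≥0∞) ∂μ ≤ ∑' m : ℕ, μ {a | ((m:ℕ∞)+1) ≤ f a} := by
  rw [MeasureTheory.lintegral]
  refine iSup₂_le ?_
  intro g hg
  rw [← SimpleFunc.lintegral_eq_lintegral]
  have hmeas : ∀ m : ℕ, MeasurableSet {a | (m : ℝ≥0∞) < g a} :=
    fun m => measurableSet_lt measurable_const g.measurable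
  have hpt : ∀ a, g a ≤ ∑' m : ℕ, Set.indicator {a | (m : ℝ≥0∞) < g a} (fun _ => (1:ℝ≥0∞)) a := by
    intro a
    refine (ennreal_le_tsum_lt (g a)).trans ?_
    apply ENNReal.tsum_le_tsum
    intro m
    rw [Set.indicator_apply]
    split_ifs with h1 h2 <;> simp_all [Set.mem_setOf_eq]
  calc ∫⁻ a, g a ∂μ
      ≤ ∫⁻ a, ∑' m : ℕ, Set.indicator {a | (m : ℝ≥0∞) < g a} (fun _ => (1:ℝ≥0∞)) a ∂μ :=
        lintegral_mono hpt
    _ = ∑' m : ℕ, ∫⁻ a, Set.indicator {a | (m : ℝ≥0∞) < g a} (fun _ => (1:ℝ≥0∞)) a ∂μ := by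
        rw [lintegral_tsum]
        intro m
        exact ((measurable_const.indicator (hmeas m)).aemeasurable)
    _ = ∑' m : ℕ, μ {a | (m : ℝ≥0∞) < g a} := by
        congr 1
        funext m
        rw [lintegral_indicator_const (hmeas m), one_mul]
    _ ≤ ∑' m : ℕ, μ {a | ((m:ℕ∞)+1) ≤ f a} := by
        apply ENNReal.tsum_le_tsum
        intro m
        apply measure_mono
        intro a ha
        simp only [Set.mem_setOf_eq] at ha ⊢
        have h2 : (m : ℝ≥0∞) < (f a : ℝ≥0∞) := lt_of_lt_of_le ha (hg a)
        have h3 : ((m:ℕ):ℕ∞) < f a := by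
          rw [← ENat.toENNReal_coe m] at h2
          exact ENat.toENNReal_lt.mp h2
        exact (ENat.add_one_le_iff (by simp)).mpr h3


lemma abs_sub_le_half_sum {f g : S → ℝ} (h : ∑ w, f w = ∑ w, g w) (y : S) :
    |f y - g y| ≤ (1/2) * ∑ w, |f w - g w| := by
  have hd : f y - g y = -∑ w ∈ Finset.univ.erase y, (f w - g w) := by
    have h2 : (f y - g y) + ∑ w ∈ Finset.univ.erase y, (f w - g w)
        = ∑ w, (f w - g w) :=
      Finset.add_sum_erase Finset.univ (fun w => f w - g w) (Finset.mem_univ y)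
    have h3 : ∑ w, (f w - g w) = 0 := by
      rw [Finset.sum_sub_distrib, h, sub_self]
    linarith
  have h5 : |f y - g y| ≤ ∑ w ∈ Finset.univ.erase y, |f w - g w| := by
    rw [hd, abs_neg]
    exact Finset.abs_sum_le_sum_abs _ _
  have h6 : ∑ w, |f w - g w|
      = |f y - g y| + ∑ w ∈ Finset.univ.erase y, |f w - g w| :=
    (Finset.add_sum_erase Finset.univ _ (Finset.mem_univ y)).symm
  linarith

lemma sum_filter_avoid (p : S → S → ℝ) (B : Finset S) (x : S) (n : ℕ) :
    ∑ v ∈ Finset.univ.filter (Avoid B n), wgt p x n v = ∑ z, U p B x n z := by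
  unfold U
  rw [← Finset.sum_fiberwise (Finset.univ.filter (Avoid B n))
    (fun v : Fin (n+1) → S => v (Fin.last n)) (wgt p x n)]
  apply Finset.sum_congr rfl
  intro z _
  rw [Finset.filter_filter]

section Meas2

variable [MeasurableSpace S] {p : S → S → ℝ} (P : S → Measure (ℕ → S))

lemma meas_coord_eq
    (hp0 : ∀ a b, 0 ≤ p a b) (hp1 : ∀ a, ∑ b, p a b = 1)
    (hP : ∀ x, IsProbabilityMeasure (P x))
    (hcyl : ∀ (x : S) (γ : ℕ → S) (n : ℕ), P x {ω | ∀ i ≤ n, ω i = γ i} =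
        if γ 0 = x then ENNReal.ofReal (∏ i ∈ Finset.range n, p (γ i) (γ (i+1))) else 0)
    (w z : S) (n : ℕ) :
    P w {ω : ℕ → S | ω n = z} = ENNReal.ofReal (U p ∅ w n z) := by
  have h := meas_event P hp0 hp1 hP hcyl w n (fun v => v (Fin.last n) = z)
  have hset : {ω : ℕ → S | (fun i : Fin (n+1) => ω i.val) (Fin.last n) = z}
      = {ω : ℕ → S | ω n = z} := by
    ext ω
    simp [Fin.val_last]
  rw [hset] at h
  rw [h]
  congr 1
  unfold U
  have hfc : Finset.univ.filter (fun v : Fin (n+1) → S => v (Fin.last n) = z)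
      = Finset.univ.filter
        (fun v : Fin (n+1) → S => Avoid ∅ n v ∧ v (Fin.last n) = z) := by
    apply Finset.filter_congr
    intro v _
    have : Avoid ∅ n v := fun i _ => Finset.notMem_empty _
    simp [this]
  rw [hfc]

end Meas2

end HitAux


/-- First return time of the trajectory `ω` to the set `A`:
`τ̄_A(ω) = inf {t > 0 : ω t ∈ A}`, valued in `ℕ∞`. -/
def returnTime {S : Type*} (A : Set S) (ω : ℕ → S) : ℕ∞ :=
  sInf ((fun n : ℕ => (n : ℕ∞)) '' {n : ℕ | 0 < n ∧ ω n ∈ A})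

/-- **Expected hitting time bound via mixing.** For an ergodic Markov chain on a finite
state space with stationary distribution `π(y) ≥ ρ/M` for all `y`, and mixing time bound
`t_mix(ρ/(2M)) ≤ t`, the expected hitting time satisfies
`E_x[τ̄_y] ≤ (1 − exp(−ρ/(2Mt)))⁻¹` for any states `x, y`. -/
theorem expected_hitting_time_le_of_mixing
    {S : Type*} [Fintype S] [DecidableEq S] [Nonempty S] [MeasurableSpace S]
    (p : S → S → ℝ) (hp0 : ∀ x y, 0 ≤ p x y) (hp1 : ∀ x, ∑ y, p x y = 1)
    (P : S → Measure (ℕ → S)) (hP : ∀ x, IsProbabilityMeasure (P x))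
    (hcyl : ∀ (x : S) (γ : ℕ → S) (n : ℕ),
      P x {ω | ∀ i ≤ n, ω i = γ i} =
        if γ 0 = x then ENNReal.ofReal (∏ i ∈ Finset.range n, p (γ i) (γ (i+1))) else 0)
    (hirr : ∀ x y : S, ∃ n : ℕ, 0 < P x {ω | ω n = y})
    (π : S → ℝ) (hπ0 : ∀ x, 0 ≤ π x) (hπ1 : ∑ x, π x = 1)
    (hstat : ∀ y, ∑ x, π x * p x y = π y)
    (ρ M : ℝ) (hρ : 0 < ρ) (hM : 0 < M)
    (hπlow : ∀ y, ρ / M ≤ π y)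
    (t : ℕ) (ht : 1 ≤ t)
    (hmix : ∀ s : ℕ, t ≤ s → ∀ x : S,
      (1/2) * ∑ y, |(P x {ω | ω s = y}).toReal - π y| ≤ ρ / (2 * M)) :
    ∀ x y : S,
      ∫⁻ ω, (returnTime {y} ω : ℝ≥0∞) ∂ P x ≤
        ENNReal.ofReal ((1 - Real.exp (-ρ / (2 * M * (t : ℝ))))⁻¹) := by
  open HitAux in
  intro x y
  haveI : NeZero t := ⟨by omega⟩
  set c : ℝ := ρ / (2 * M) with hc_def
  have hc0 : 0 < c := by positivity
  -- step probability lower bound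
  have hc : ∀ w : S, c ≤ U p ∅ w t y := by
    intro w
    have hU : ∀ z : S, (P w {ω : ℕ → S | ω t = z}).toReal = U p ∅ w t z := by
      intro z
      rw [meas_coord_eq P hp0 hp1 hP hcyl w z t,
        ENNReal.toReal_ofReal (U_nonneg hp0 ∅ w t z)]
    have hm := hmix t le_rfl w
    rw [Finset.sum_congr rfl fun z _ => by rw [hU z]] at hm
    have habs : |U p ∅ w t y - π y| ≤ (1/2) * ∑ z, |U p ∅ w t z - π z| := by
      apply abs_sub_le_half_sum
      rw [sum_U_empty hp1 w t, hπ1]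
    have hlow := hπlow y
    have h2M : c + c = ρ / M := by
      rw [hc_def]
      field_simp
      ring
    have := abs_le.mp (habs.trans hm)
    linarith [this.1]
  have hc1 : c ≤ 1 := by
    have h1 := sum_U_empty hp1 (Classical.arbitrary S) t
    have h2 : U p ∅ (Classical.arbitrary S) t y ≤ ∑ z, U p ∅ (Classical.arbitrary S) t z :=
      Finset.single_le_sum (fun z _ => U_nonneg hp0 ∅ _ t z) (Finset.mem_univ y)
    linarith [hc (Classical.arbitrary S)]
  -- tail bound for each m
  have htail : ∀ m : ℕ,
      P x {ω : ℕ → S | ((m:ℕ∞)+1) ≤ returnTime {y} ω}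
        ≤ ENNReal.ofReal ((1-c)^(m / t)) := by
    intro m
    set n' := t * (m / t) with hn'
    have hn'm : n' ≤ m := by
      rw [hn', mul_comm]
      exact Nat.div_mul_le_self m t
    have hincl : {ω : ℕ → S | ((m:ℕ∞)+1) ≤ returnTime {y} ω}
        ⊆ {ω : ℕ → S | Avoid {y} n' (fun i : Fin (n'+1) => ω i.val)} := by
      intro ω hω
      intro i hi
      simp only [Finset.mem_singleton]
      intro hiy
      have hmem : ((i.val : ℕ) : ℕ∞) ∈
          ((fun n : ℕ => (n : ℕ∞)) '' {n : ℕ | 0 < n ∧ ω n ∈ ({y} : Set S)}) :=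
        ⟨i.val, ⟨hi, by simp [hiy]⟩, rfl⟩
      have hle : returnTime {y} ω ≤ (i.val : ℕ∞) := sInf_le hmem
      have hchain : ((m:ℕ∞)+1) ≤ (i.val : ℕ∞) := le_trans hω hle
      have : m + 1 ≤ i.val := by
        rw [show ((m:ℕ∞)+1) = ((m+1 : ℕ) : ℕ∞) from by push_cast; ring] at hchain
        exact_mod_cast hchain
      have := i.isLt
      omega
    refine (measure_mono hincl).trans ?_
    rw [meas_event P hp0 hp1 hP hcyl x n' (Avoid {y} n'), sum_filter_avoid]
    exact ENNReal.ofReal_le_ofReal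
      (geom_decay hp0 hp1 y ht (le_of_lt hc0) hc1 hc x (m / t))
  -- integrate
  have hint := lintegral_le_tsum_tail (P x) (returnTime ({y} : Set S))
  refine hint.trans ?_
  have hsum1 : ∑' m : ℕ, P x {ω : ℕ → S | ((m:ℕ∞)+1) ≤ returnTime {y} ω}
      ≤ ∑' m : ℕ, ENNReal.ofReal ((1-c)^(m / t)) :=
    ENNReal.tsum_le_tsum htail
  refine hsum1.trans ?_
  set r : ℝ≥0∞ := ENNReal.ofReal (1-c) with hr
  have hpow : ∀ m : ℕ, ENNReal.ofReal ((1-c)^(m / t)) = r ^ (m / t) := by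
    intro m
    rw [hr, ENNReal.ofReal_pow (by linarith)]
  rw [tsum_congr hpow]
  have hre : ∑' m : ℕ, r ^ (m / t) = ∑' kj : ℕ × Fin t, r ^ kj.1 := by
    rw [← Equiv.tsum_eq (Nat.divModEquiv t) (fun kj : ℕ × Fin t => r ^ kj.1)]
    rfl
  rw [hre, ENNReal.tsum_prod (f := fun (k : ℕ) (_ : Fin t) => r ^ k)]
  have hin : ∀ k : ℕ, ∑' _ : Fin t, r ^ k = (t : ℝ≥0∞) * r ^ k := by
    intro k
    rw [tsum_fintype]
    simp [Finset.sum_const, nsmul_eq_mul]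
  rw [tsum_congr hin, ENNReal.tsum_mul_left, ENNReal.tsum_geometric]
  have h1r : 1 - r = ENNReal.ofReal c := by
    rw [hr, ← ENNReal.ofReal_one, ← ENNReal.ofReal_sub _ (by linarith)]
    norm_num
  rw [h1r]
  -- final real-number estimate
  have htR : (0:ℝ) < t := by exact_mod_cast Nat.pos_of_ne_zero (by omega)
  have hct : (0:ℝ) < c / t := by positivity
  have hexp_eq : -ρ / (2 * M * (t:ℝ)) = -(c/t) := by
    rw [hc_def]
    field_simp
  have hd0 : 0 < 1 - Real.exp (-(c/t)) := by
    have : Real.exp (-(c/t)) < 1 := Real.exp_lt_one_iff.mpr (by linarith)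
    linarith
  have hdle : 1 - Real.exp (-(c/t)) ≤ c / t := by
    have := Real.add_one_le_exp (-(c/t))
    linarith
  have hfin : (t:ℝ) / c ≤ (1 - Real.exp (-(c/t)))⁻¹ := by
    have h1 : (c/t)⁻¹ ≤ (1 - Real.exp (-(c/t)))⁻¹ := by
      have := one_div_le_one_div_of_le hd0 hdle
      simpa [one_div] using this
    have h2 : (c/t)⁻¹ = (t:ℝ)/c := by
      field_simp
    linarith [h1, h2.symm.le]
  calc (t : ℝ≥0∞) * (ENNReal.ofReal c)⁻¹
      = ENNReal.ofReal ((t:ℝ) / c) := by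
        rw [ENNReal.ofReal_div_of_pos hc0, div_eq_mul_inv, ENNReal.ofReal_natCast]
    _ ≤ ENNReal.ofReal ((1 - Real.exp (-(c/t)))⁻¹) := ENNReal.ofReal_le_ofReal hfin
    _ = ENNReal.ofReal ((1 - Real.exp (-ρ / (2 * M * (t : ℝ))))⁻¹) := by rw [hexp_eq]
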